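/- arXiv:2005.03921 — 2 statements merged into one kernel-verified Lean document; each statement's English description precedes it below -/
import Mathlib

section
/- For each integer n ≥ 0 and real (or complex) α and x, the higher-order Euler polynomial satisfies E_n^{(α)}(x) = Σ_{k=0}^{n} C(n,k) · [Σ_{i=0}^{k} ⟨−α⟩_i · S(k,i)/2^i] · x^{n−k}. -/
open Finset

/-- Stirling numbers of the second kind `S(n,k)`. -/
def stirling : ℕ → ℕ → ℕ
  | 0, 0 => 1
  | 0, _ + 1 => 0
  | _ + 1, 0 => 0
  | n + 1, k + 1 => (k + 1) * stirling n (k + 1) + stirling n k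

/-- The falling factorial `⟨x⟩_i = x (x-1) ⋯ (x-i+1)`, with `⟨x⟩_0 = 1`. -/
def fallingFac (x : ℝ) (i : ℕ) : ℝ := ∏ k ∈ Finset.range i, (x - k)

/-- The function `(e^t - 1)/t`, extended by the value `1` at `t = 0`. -/
noncomputable def expm1Div (t : ℝ) : ℝ := if t = 0 then 1 else (Real.exp t - 1) / t

/-- The higher-order Bernoulli polynomial `B_n^{(α)}(x)`, defined via the generating
function `(t/(eᵗ-1))^α e^{xt} = ∑ B_n^{(α)}(x) tⁿ/n!`, i.e. as the `n`-th derivative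
of `((eᵗ-1)/t)^{-α} e^{xt}` at `t = 0`. -/
noncomputable def higherBernoulli (n : ℕ) (α x : ℝ) : ℝ :=
  iteratedDeriv n (fun t => expm1Div t ^ (-α) * Real.exp (x * t)) 0

/-- The higher-order Euler polynomial `E_n^{(α)}(x)`, defined via the generating
function `(2/(eᵗ+1))^α e^{xt} = ∑ E_n^{(α)}(x) tⁿ/n!`. -/
noncomputable def higherEuler (n : ℕ) (α x : ℝ) : ℝ :=
  iteratedDeriv n (fun t => ((Real.exp t + 1) / 2) ^ (-α) * Real.exp (x * t)) 0

-- auxiliary lemmas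
lemma stirling_eq_zero_of_lt : ∀ {n k : ℕ}, n < k → stirling n k = 0
  | 0, _ + 1, _ => rfl
  | n + 1, k + 1, h => by
      have h1 : n < k + 1 := by omega
      have h2 : n < k := by omega
      simp [stirling, stirling_eq_zero_of_lt h1, stirling_eq_zero_of_lt h2]

lemma fallingFac_zero (x : ℝ) : fallingFac x 0 = 1 := by simp [fallingFac]

lemma fallingFac_succ (x : ℝ) (i : ℕ) : fallingFac x (i + 1) = fallingFac x i * (x - i) := by
  simp [fallingFac, Finset.prod_range_succ]

lemma fallingFac_succ' (x : ℝ) (i : ℕ) : fallingFac x (i + 1) = x * fallingFac (x - 1) i := by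
  simp only [fallingFac, Finset.prod_range_succ']
  rw [mul_comm]
  congr 1
  · norm_num
  · exact Finset.prod_congr rfl fun k _ => by push_cast; ring

noncomputable def Ck (k : ℕ) (α : ℝ) : ℝ :=
  ∑ i ∈ Finset.range (k + 1), fallingFac (-α) i * (stirling k i : ℝ) / 2 ^ i

lemma Ck_succ (k : ℕ) (α : ℝ) :
    Ck (k + 1) α = -α * Ck k α + α / 2 * Ck k (α + 1) := by
  have hst : ∀ i : ℕ, stirling (k + 1) (i + 1) = (i + 1) * stirling k (i + 1) + stirling k i :=
    fun i => rfl
  -- rewrite LHS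
  rw [Ck, Finset.sum_range_succ']
  have h0 : fallingFac (-α) 0 * (stirling (k + 1) 0 : ℝ) / 2 ^ 0 = 0 := by
    simp [stirling]
  rw [h0, add_zero]
  have key : ∀ i ∈ Finset.range (k + 1),
      fallingFac (-α) (i + 1) * (stirling (k + 1) (i + 1) : ℝ) / 2 ^ (i + 1)
        = ((i : ℝ) + 1) * fallingFac (-α) (i + 1) * (stirling k (i + 1) : ℝ) / 2 ^ (i + 1)
          + fallingFac (-α) (i + 1) * (stirling k i : ℝ) / 2 ^ (i + 1) := by
    intro i _
    rw [hst i]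
    push_cast
    ring
  rw [Finset.sum_congr rfl key, Finset.sum_add_distrib]
  -- handle the shifted sum
  have hA : ∑ i ∈ Finset.range (k + 1),
        ((i : ℝ) + 1) * fallingFac (-α) (i + 1) * (stirling k (i + 1) : ℝ) / 2 ^ (i + 1)
      = ∑ i ∈ Finset.range (k + 1),
        (i : ℝ) * fallingFac (-α) i * (stirling k i : ℝ) / 2 ^ i := by
    have h1 := Finset.sum_range_succ'
      (fun j : ℕ => (j : ℝ) * fallingFac (-α) j * (stirling k j : ℝ) / 2 ^ j) (k + 1)
    have h2 := Finset.sum_range_succ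
      (fun j : ℕ => (j : ℝ) * fallingFac (-α) j * (stirling k j : ℝ) / 2 ^ j) (k + 1)
    rw [h2] at h1
    have hz : ((k : ℝ) + 1) * fallingFac (-α) (k + 1) * (stirling k (k + 1) : ℝ) / 2 ^ (k + 1)
        = 0 := by
      rw [stirling_eq_zero_of_lt (Nat.lt_succ_self k)]; simp
    simp only [Nat.cast_zero, zero_mul, zero_div, add_zero, Nat.cast_add, Nat.cast_one] at h1
    rw [hz, add_zero] at h1
    exact h1.symm
  rw [hA]
  -- now RHS
  rw [Ck, Ck, Finset.mul_sum, Finset.mul_sum, ← Finset.sum_add_distrib, ← Finset.sum_add_distrib]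
  refine Finset.sum_congr rfl fun i _ => ?_
  have e1 : -α * fallingFac (-(α + 1)) i = fallingFac (-α) i * (-α - i) := by
    rw [show -(α + 1) = -α - 1 by ring, ← fallingFac_succ' (-α) i, fallingFac_succ]
  have e2 : fallingFac (-α) (i + 1) = -α * fallingFac (-(α + 1)) i := by
    rw [show -(α + 1) = -α - 1 by ring]; exact fallingFac_succ' (-α) i
  rw [e2, pow_succ]
  linear_combination ((stirling k i : ℝ) / 2 ^ i) * e1

lemma Ck_zero (α : ℝ) : Ck 0 α = 1 := by simp [Ck, fallingFac, stirling]

noncomputable def P (n : ℕ) (α x : ℝ) : ℝ :=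
  ∑ k ∈ Finset.range (n + 1), (n.choose k : ℝ) * Ck k α * x ^ (n - k)

lemma P_succ (n : ℕ) (α x : ℝ) :
    P (n + 1) α x = (x - α) * P n α x + α / 2 * P n (α + 1) x := by
  have key : ∀ j : ℕ, ((n + 1).choose (j + 1) : ℝ) * Ck (j + 1) α * x ^ (n + 1 - (j + 1))
      = (n.choose j : ℝ) * Ck (j + 1) α * x ^ (n - j)
        + (n.choose (j + 1) : ℝ) * Ck (j + 1) α * x ^ (n - j) := by
    intro j
    rw [Nat.succ_sub_succ, Nat.choose_succ_succ]
    push_cast; ring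
  rw [P, Finset.sum_range_succ']
  simp only [key, Finset.sum_add_distrib, Nat.choose_zero_right, Nat.cast_one, Ck_zero,
    one_mul, mul_one, Nat.sub_zero]
  have hxP : x * P n α x
      = ∑ j ∈ Finset.range (n + 1), (n.choose j : ℝ) * Ck j α * x ^ (n + 1 - j) := by
    rw [P, Finset.mul_sum]
    refine Finset.sum_congr rfl fun j hj => ?_
    rw [Finset.mem_range] at hj
    rw [show n + 1 - j = (n - j) + 1 by omega, pow_succ]
    ring
  have hshift : ∑ j ∈ Finset.range (n + 1), (n.choose (j + 1) : ℝ) * Ck (j + 1) α * x ^ (n - j)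
        + x ^ (n + 1)
      = ∑ j ∈ Finset.range (n + 1), (n.choose j : ℝ) * Ck j α * x ^ (n + 1 - j) := by
    rw [Finset.sum_range_succ' (fun j : ℕ => (n.choose j : ℝ) * Ck j α * x ^ (n + 1 - j)) n,
      Finset.sum_range_succ (fun j : ℕ => (n.choose (j + 1) : ℝ) * Ck (j + 1) α * x ^ (n - j)) n,
      Nat.choose_succ_self]
    simp only [Nat.cast_zero, zero_mul, add_zero, Nat.choose_zero_right, Nat.cast_one,
      Ck_zero, one_mul, mul_one, Nat.sub_zero]
    congr 1
    refine Finset.sum_congr rfl fun j hj => ?_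
    rw [Nat.succ_sub_succ]
  have hR : (x - α) * P n α x + α / 2 * P n (α + 1) x
      = x * P n α x + ∑ j ∈ Finset.range (n + 1), (n.choose j : ℝ) * Ck (j + 1) α * x ^ (n - j) := by
    rw [P, P, Finset.mul_sum, Finset.mul_sum, Finset.mul_sum,
      ← Finset.sum_add_distrib, ← Finset.sum_add_distrib]
    refine Finset.sum_congr rfl fun j _ => ?_
    rw [Ck_succ]
    ring
  rw [hR, hxP, ← hshift]
  ring

noncomputable def eulerGen (α x : ℝ) : ℝ → ℝ :=
  fun t => ((Real.exp t + 1) / 2) ^ (-α) * Real.exp (x * t)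

lemma base_pos (t : ℝ) : 0 < (Real.exp t + 1) / 2 := by positivity

lemma eulerGen_contDiff (α x : ℝ) (n : ℕ∞) : ContDiff ℝ n (eulerGen α x) := by
  apply ContDiff.mul
  · rw [contDiff_iff_contDiffAt]
    intro t
    exact (((Real.contDiff_exp.contDiffAt).add contDiffAt_const).div_const 2).rpow_const_of_ne
      (ne_of_gt (base_pos t))
  · exact Real.contDiff_exp.comp (contDiff_const.mul contDiff_id)

lemma eulerGen_hasDerivAt (α x t : ℝ) :
    HasDerivAt (eulerGen α x)
      ((x - α) * eulerGen α x t + α / 2 * eulerGen (α + 1) x t) t := by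
  have hb : HasDerivAt (fun t : ℝ => (Real.exp t + 1) / 2) (Real.exp t / 2) t :=
    ((Real.hasDerivAt_exp t).add_const 1).div_const 2
  have h1 : HasDerivAt (fun t : ℝ => ((Real.exp t + 1) / 2) ^ (-α))
      (Real.exp t / 2 * (-α) * ((Real.exp t + 1) / 2) ^ (-α - 1)) t :=
    hb.rpow_const (Or.inl (ne_of_gt (base_pos t)))
  have h2 : HasDerivAt (fun t : ℝ => Real.exp (x * t)) (x * Real.exp (x * t)) t := by
    simpa [mul_comm, Function.comp_def] using (Real.hasDerivAt_exp (x * t)).comp t ((hasDerivAt_id t).const_mul x)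
  have h3 : HasDerivAt (eulerGen α x) _ t := h1.fun_mul h2
  convert h3 using 1
  have hsplit : ((Real.exp t + 1) / 2) ^ (-α - 1) * ((Real.exp t + 1) / 2)
      = ((Real.exp t + 1) / 2) ^ (-α) := by
    rw [← Real.rpow_add_one (ne_of_gt (base_pos t)) (-α - 1)]
    ring_nf
  simp only [eulerGen]
  rw [show -(α + 1) = -α - 1 by ring, ← hsplit]
  ring

lemma eulerGen_deriv (α x : ℝ) :
    deriv (eulerGen α x)
      = fun t => (x - α) * eulerGen α x t + α / 2 * eulerGen (α + 1) x t :=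
  funext fun t => (eulerGen_hasDerivAt α x t).deriv

lemma iteratedDeriv_add'' {n : ℕ} {f g : ℝ → ℝ} (hf : ContDiff ℝ n f) (hg : ContDiff ℝ n g)
    (y : ℝ) :
    iteratedDeriv n (fun t => f t + g t) y = iteratedDeriv n f y + iteratedDeriv n g y := by
  simp only [← iteratedDerivWithin_univ]
  exact iteratedDerivWithin_add (Set.mem_univ y) uniqueDiffOn_univ hf.contDiffWithinAt hg.contDiffWithinAt

lemma iteratedDeriv_const_mul'' {n : ℕ} {f : ℝ → ℝ} (hf : ContDiff ℝ n f) (c y : ℝ) :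
    iteratedDeriv n (fun t => c * f t) y = c * iteratedDeriv n f y := by
  simp only [← iteratedDerivWithin_univ]
  exact iteratedDerivWithin_const_mul (Set.mem_univ y) uniqueDiffOn_univ c hf.contDiffWithinAt

lemma higherEuler_eq (n : ℕ) (α x : ℝ) :
    higherEuler n α x = iteratedDeriv n (eulerGen α x) 0 := rfl

lemma higherEuler_zero' (α x : ℝ) : higherEuler 0 α x = 1 := by
  rw [higherEuler, iteratedDeriv_zero]
  norm_num

lemma higherEuler_succ (n : ℕ) (α x : ℝ) :
    higherEuler (n + 1) α x = (x - α) * higherEuler n α x + α / 2 * higherEuler n (α + 1) x := by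
  have h : higherEuler (n + 1) α x = iteratedDeriv n (deriv (eulerGen α x)) 0 := by
    rw [higherEuler_eq, iteratedDeriv_succ']
  rw [h, eulerGen_deriv]
  have c1 : ContDiff ℝ (n : ℕ∞) (fun t => (x - α) * eulerGen α x t) :=
    contDiff_const.mul (eulerGen_contDiff α x n)
  have c2 : ContDiff ℝ (n : ℕ∞) (fun t => α / 2 * eulerGen (α + 1) x t) :=
    contDiff_const.mul (eulerGen_contDiff (α + 1) x n)
  rw [iteratedDeriv_add'' c1 c2,
    iteratedDeriv_const_mul'' (eulerGen_contDiff α x n) (x - α) 0,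
    iteratedDeriv_const_mul'' (eulerGen_contDiff (α + 1) x n) (α / 2) 0]
  rfl

lemma higherEuler_eq_P (n : ℕ) (x : ℝ) : ∀ α : ℝ, higherEuler n α x = P n α x := by
  induction n with
  | zero => intro α; rw [higherEuler_zero']; simp [P, Ck_zero]
  | succ n ih =>
    intro α
    rw [higherEuler_succ, ih α, ih (α + 1), P_succ]

theorem higherEuler_closed_form (n : ℕ) (α x : ℝ) :
    higherEuler n α x =
      ∑ k ∈ Finset.range (n + 1), (n.choose k : ℝ) *
        (∑ i ∈ Finset.range (k + 1), fallingFac (-α) i * (stirling k i : ℝ) / 2 ^ i) *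
        x ^ (n - k) := by
  rw [higherEuler_eq_P n x α]
  rfl
end

section
/- Let p, q be k-times differentiable functions with q(x) ≠ 0. Then the k-th derivative of p/q at x equals ((−1)^k / q(x)^{k+1}) times the determinant of the (k+1)×(k+1) matrix W whose first column has entries p^{(l−1)}(x) for 1 ≤ l ≤ k+1, and whose (i,j)-entry for 2 ≤ j ≤ k+1 is C(i−1, j−2) q^{(i−j+1)}(x) when i ≥ j−1 and 0 otherwise. -/
open Finset Topology

lemma pascal_sum (n : ℕ) (F G : ℕ → ℝ) :
    (∑ m ∈ Finset.range (n+1), (n.choose m : ℝ) * F (m+1) * G (n-m)) +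
      ∑ m ∈ Finset.range (n+1), (n.choose m : ℝ) * F m * G (n+1-m) =
    ∑ m ∈ Finset.range (n+2), ((n+1).choose m : ℝ) * F m * G (n+1-m) := by
  rw [Finset.sum_range_succ' (fun m => ((n+1).choose m : ℝ) * F m * G (n+1-m)) (n+1),
      Finset.sum_range_succ' (fun m => (n.choose m : ℝ) * F m * G (n+1-m)) n,
      Finset.sum_range_succ (fun m => (n.choose m : ℝ) * F (m+1) * G (n-m)) n,
      Finset.sum_range_succ (fun m => ((n+1).choose (m+1) : ℝ) * F (m+1) * G (n+1-(m+1))) n]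
  simp only [Nat.choose_succ_succ, Nat.cast_add, Nat.succ_sub_succ, Nat.choose_zero_right,
    Nat.cast_one, one_mul, Nat.sub_zero, Nat.choose_self, Nat.succ_eq_add_one,
    Nat.choose_succ_self, Nat.cast_zero, add_mul, zero_mul, Nat.sub_self]
  rw [Finset.sum_add_distrib]
  ring

lemma iteratedDerivWithin_of_isOpen' {s : Set ℝ} {f : ℝ → ℝ} (n : ℕ) (hs : IsOpen s)
    {x : ℝ} (hx : x ∈ s) : iteratedDerivWithin n f s x = iteratedDeriv n f x := by
  simp only [iteratedDerivWithin, iteratedDeriv, iteratedFDerivWithin_of_isOpen n hs hx]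

lemma iteratedDeriv_add_of_isOpen {s : Set ℝ} {f g : ℝ → ℝ} (n : ℕ) (hs : IsOpen s)
    {x : ℝ} (hx : x ∈ s) (hf : ContDiffOn ℝ n f s) (hg : ContDiffOn ℝ n g s) :
    iteratedDeriv n (fun y => f y + g y) x = iteratedDeriv n f x + iteratedDeriv n g x := by
  rw [← iteratedDerivWithin_of_isOpen' (f := fun y => f y + g y) n hs hx,
    ← iteratedDerivWithin_of_isOpen' (f := f) n hs hx,
    ← iteratedDerivWithin_of_isOpen' (f := g) n hs hx]
  exact iteratedDerivWithin_add hx hs.uniqueDiffOn (hf x hx) (hg x hx)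

lemma leibniz_open {s : Set ℝ} (hs : IsOpen s) :
    ∀ (n : ℕ) (f g : ℝ → ℝ), ContDiffOn ℝ n f s → ContDiffOn ℝ n g s → ∀ x ∈ s,
      iteratedDeriv n (fun y => f y * g y) x =
        ∑ m ∈ Finset.range (n+1),
          (n.choose m : ℝ) * iteratedDeriv m f x * iteratedDeriv (n-m) g x := by
  intro n
  induction n with
  | zero => intro f g _ _ x _; simp
  | succ n IH =>
    intro f g hf hg x hx
    have hd : ∀ y ∈ s, DifferentiableAt ℝ f y := fun y hy =>
      (hf.contDiffAt (hs.mem_nhds hy)).differentiableAt (by norm_cast)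
    have hd' : ∀ y ∈ s, DifferentiableAt ℝ g y := fun y hy =>
      (hg.contDiffAt (hs.mem_nhds hy)).differentiableAt (by norm_cast)
    have hfd : ContDiffOn ℝ n (deriv f) s := hf.deriv_of_isOpen hs (by norm_cast)
    have hgd : ContDiffOn ℝ n (deriv g) s := hg.deriv_of_isOpen hs (by norm_cast)
    have hfn : ContDiffOn ℝ n f s := hf.of_le (by norm_cast; omega)
    have hgn : ContDiffOn ℝ n g s := hg.of_le (by norm_cast; omega)
    have hev : (deriv fun y => f y * g y) =ᶠ[𝓝 x]
        fun y => deriv f y * g y + f y * deriv g y := by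
      filter_upwards [hs.mem_nhds hx] with y hy
      exact deriv_mul (hd y hy) (hd' y hy)
    rw [iteratedDeriv_succ', hev.iteratedDeriv_eq n,
      iteratedDeriv_add_of_isOpen n hs hx (hfd.mul hgn) (hfn.mul hgd),
      IH _ _ hfd hgn x hx, IH _ _ hfn hgd x hx]
    have e1 : ∀ m ∈ Finset.range (n+1),
        (n.choose m : ℝ) * iteratedDeriv m (deriv f) x * iteratedDeriv (n-m) g x
          = (n.choose m : ℝ) * iteratedDeriv (m+1) f x * iteratedDeriv (n-m) g x := by
      intro m _; rw [← iteratedDeriv_succ']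
    have e2 : ∀ m ∈ Finset.range (n+1),
        (n.choose m : ℝ) * iteratedDeriv m f x * iteratedDeriv (n-m) (deriv g) x
          = (n.choose m : ℝ) * iteratedDeriv m f x * iteratedDeriv (n+1-m) g x := by
      intro m hm
      rw [← iteratedDeriv_succ', show n - m + 1 = n + 1 - m by
        have := Finset.mem_range.mp hm; omega]
    rw [Finset.sum_congr rfl e1, Finset.sum_congr rfl e2]
    exact pascal_sum n (fun m => iteratedDeriv m f x) (fun m => iteratedDeriv m g x)

/-- Determinantal formula for the `k`-th derivative of a quotient `p/q`. -/
theorem iteratedDeriv_div_eq_det (k : ℕ) (p q : ℝ → ℝ)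
    (hp : ContDiff ℝ k p) (hq : ContDiff ℝ k q) (x : ℝ) (hqx : q x ≠ 0) :
    iteratedDeriv k (fun y => p y / q y) x =
      (-1 : ℝ) ^ k / q x ^ (k + 1) *
        (Matrix.of fun i j : Fin (k + 1) =>
          if (j : ℕ) = 0 then iteratedDeriv i p x
          else if (j : ℕ) ≤ (i : ℕ) + 1 then
            ((i : ℕ).choose ((j : ℕ) - 1) : ℝ) * iteratedDeriv ((i : ℕ) + 1 - (j : ℕ)) q x
          else 0).det := by
  set U : Set ℝ := {y | q y ≠ 0} with hUdef
  have hUo : IsOpen U := isOpen_compl_singleton.preimage hq.continuous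
  have hxU : x ∈ U := hqx
  set f : ℝ → ℝ := fun y => p y / q y with hfdef
  have hfU : ContDiffOn ℝ k f U := (hp.contDiffOn).div (hq.contDiffOn) (fun y hy => hy)
  set c : ℕ → ℝ := fun m => iteratedDeriv m f x with hc
  have key : ∀ i : ℕ, i ≤ k → iteratedDeriv i p x
      = ∑ m ∈ Finset.range (i+1), (i.choose m : ℝ) * c m * iteratedDeriv (i-m) q x := by
    intro i hi
    have hpe : p =ᶠ[𝓝 x] fun y => f y * q y := by
      filter_upwards [hUo.mem_nhds hxU] with y hy
      exact (div_mul_cancel₀ (p y) hy).symm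
    rw [hpe.iteratedDeriv_eq i,
      leibniz_open hUo i f q (hfU.of_le (by exact_mod_cast hi))
        ((hq.contDiffOn).of_le (by exact_mod_cast hi)) x hxU]
  set W : Matrix (Fin (k+1)) (Fin (k+1)) ℝ := Matrix.of fun i j : Fin (k + 1) =>
    if (j : ℕ) = 0 then iteratedDeriv i p x
    else if (j : ℕ) ≤ (i : ℕ) + 1 then
      ((i : ℕ).choose ((j : ℕ) - 1) : ℝ) * iteratedDeriv ((i : ℕ) + 1 - (j : ℕ)) q x
    else 0 with hWdef
  set E : Matrix (Fin (k+1)) (Fin (k+1)) ℝ := Matrix.of fun i j : Fin (k+1) =>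
    if (j : ℕ) = 0 then (if (i : ℕ) = 0 then 1 else - c ((i : ℕ) - 1))
    else (if i = j then 1 else 0) with hEdef
  have hEdet : E.det = 1 := by
    rw [Matrix.det_of_lowerTriangular E ?ht]
    case ht =>
      intro i j hij
      have hij' : (i : ℕ) < (j : ℕ) := hij
      simp only [hEdef, Matrix.of_apply]
      rw [if_neg (by omega), if_neg (by exact fun h => absurd (congrArg Fin.val h) (by omega))]
    · apply Finset.prod_eq_one
      intro i _
      simp only [hEdef, Matrix.of_apply]
      by_cases h : (i : ℕ) = 0 <;> simp [h]
  have hWE : ∀ i j : Fin (k+1), (W * E) i j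
      = if (j : ℕ) = 0 then (if (i : ℕ) = k then q x * c k else 0) else W i j := by
    intro i j
    rw [Matrix.mul_apply]
    by_cases hj : (j : ℕ) = 0
    · have hj0 : j = 0 := Fin.ext hj
      subst hj0
      rw [if_pos (by simp : ((0 : Fin (k+1)) : ℕ) = 0)]
      have hE0 : E 0 0 = 1 := by simp [hEdef]
      have hEl : ∀ l : Fin k, E l.succ 0 = - c (l : ℕ) := by
        intro l
        simp only [hEdef, Matrix.of_apply, Fin.val_succ, Fin.val_zero, if_pos]
        rw [if_neg (by omega)]
        simp
      have h1 : W i 0 = ∑ m ∈ Finset.range ((i:ℕ)+1),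
          ((i:ℕ).choose m : ℝ) * c m * iteratedDeriv ((i:ℕ)-m) q x := by
        simp only [hWdef, Matrix.of_apply, Fin.val_zero, if_true]
        exact key i i.is_le
      have h2 : ∀ l : Fin k, W i l.succ = if (l:ℕ) ≤ (i:ℕ) then
          ((i:ℕ).choose (l:ℕ) : ℝ) * iteratedDeriv ((i:ℕ)-(l:ℕ)) q x else 0 := by
        intro l
        simp only [hWdef, Matrix.of_apply, Fin.val_succ]
        rw [if_neg (by omega)]
        by_cases hl : (l:ℕ) ≤ (i:ℕ)
        · rw [if_pos (by omega), if_pos hl, Nat.add_sub_cancel,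
            show (i:ℕ)+1-((l:ℕ)+1) = (i:ℕ)-(l:ℕ) by omega]
        · rw [if_neg (by omega), if_neg hl]
      have hsum : ∑ l, W i l * E l 0 = W i 0 - ∑ m ∈ Finset.range k,
          (if m ≤ (i:ℕ) then ((i:ℕ).choose m : ℝ) * c m * iteratedDeriv ((i:ℕ)-m) q x
            else 0) := by
        rw [Fin.sum_univ_succ, hE0, mul_one]
        have e : ∀ l : Fin k, W i l.succ * E l.succ 0
            = -(if (l:ℕ) ≤ (i:ℕ) then
                ((i:ℕ).choose (l:ℕ) : ℝ) * c (l:ℕ) * iteratedDeriv ((i:ℕ)-(l:ℕ)) q x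
              else 0) := by
          intro l
          rw [h2 l, hEl l]
          by_cases hl : (l:ℕ) ≤ (i:ℕ) <;> simp [hl] <;> ring
        rw [Finset.sum_congr rfl (fun l _ => e l), Finset.sum_neg_distrib,
          Fin.sum_univ_eq_sum_range (fun m => (if m ≤ (i:ℕ) then
            ((i:ℕ).choose m : ℝ) * c m * iteratedDeriv ((i:ℕ)-m) q x else 0)) k]
        ring
      rw [hsum, h1]
      by_cases hik : (i:ℕ) = k
      · rw [if_pos hik, hik]
        rw [Finset.sum_congr rfl (fun m hm => if_pos (by
          have := Finset.mem_range.mp hm; omega))]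
        rw [Finset.sum_range_succ]
        simp [Nat.choose_self, Nat.sub_self]
        ring
      · rw [if_neg hik]
        have hik' : (i:ℕ) < k := lt_of_le_of_ne i.is_le hik
        rw [← Finset.sum_filter]
        have hfil : (Finset.range k).filter (fun m => m ≤ (i:ℕ)) = Finset.range ((i:ℕ)+1) := by
          ext m
          simp only [Finset.mem_filter, Finset.mem_range]
          omega
        rw [hfil, sub_self]
    · rw [if_neg hj]
      have e : ∀ l : Fin (k+1), W i l * E l j = if l = j then W i j else 0 := by
        intro l
        simp only [hEdef, Matrix.of_apply]
        rw [if_neg hj]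
        by_cases hl : l = j <;> simp [hl]
      rw [Finset.sum_congr rfl (fun l _ => e l), Finset.sum_ite_eq' Finset.univ j,
        if_pos (Finset.mem_univ j)]
  have hWEdet : (W * E).det = W.det := by rw [Matrix.det_mul, hEdet, mul_one]
  have hminor : ((W * E).submatrix (Fin.last k).succAbove Fin.succ).det = q x ^ k := by
    rw [Fin.succAbove_last, Matrix.det_of_lowerTriangular _ ?ht2]
    case ht2 =>
      intro a b hab
      have hab' : (a:ℕ) < (b:ℕ) := hab
      simp only [Matrix.submatrix_apply]
      rw [hWE, if_neg (by simp [Fin.val_succ])]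
      simp only [hWdef, Matrix.of_apply, Fin.val_succ, Fin.coe_castSucc]
      rw [if_neg (by omega), if_neg (by omega)]
    · have e : ∀ a : Fin k, ((W*E).submatrix Fin.castSucc Fin.succ) a a = q x := by
        intro a
        simp only [Matrix.submatrix_apply]
        rw [hWE, if_neg (by simp [Fin.val_succ])]
        simp only [hWdef, Matrix.of_apply, Fin.val_succ, Fin.coe_castSucc]
        rw [if_neg (by omega), if_pos (by omega), Nat.add_sub_cancel,
          show (a:ℕ)+1-((a:ℕ)+1) = 0 by omega]
        simp [Nat.choose_self]
      rw [Finset.prod_congr rfl (fun a _ => e a)]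
      simp [Finset.prod_const, Finset.card_univ]
  have hdet : W.det = (-1:ℝ)^k * (q x * c k) * q x ^ k := by
    rw [← hWEdet, Matrix.det_succ_column_zero, Finset.sum_eq_single (Fin.last k)]
    · rw [hWE, if_pos (by simp), if_pos (by simp [Fin.val_last]), hminor, Fin.val_last]
    · intro b _ hb
      rw [hWE, if_pos (by simp), if_neg (fun h => hb (Fin.ext (by simp [Fin.val_last, h])))]
      ring
    · intro h; exact absurd (Finset.mem_univ _) h
  have hfin : iteratedDeriv k f x = c k := rfl
  rw [hfin, hdet]
  have h1 : ((-1:ℝ)^k) * ((-1:ℝ)^k) = 1 := by rw [← mul_pow]; norm_num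
  field_simp
  ring_nf
  rw [show k*2 = 2*k by ring, pow_mul, neg_one_sq, one_pow, mul_one]
end
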